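/- Let D ⊂ ℝ³ be a bounded measurable set that is invariant under every rotation about the x₃-axis, i.e. for every θ ∈ ℝ, the point (cos θ·x₁ − sin θ·x₂, sin θ·x₁ + cos θ·x₂, x₃) belongs to D if and only if (x₁,x₂,x₃) does. Define the velocity field U(x) = (1/(4π)) ∫_D (x−y)^⊥/|x−y|³ dy, where v^⊥ := (−v₂, v₁, 0) for v = (v₁,v₂,v₃) ∈ ℝ³ (the integral converges absolutely for every x since |x−y|^{−2} is locally integrable in ℝ³). Then U(x) · x = 0 for every x ∈ ℝ³. -/

import Mathlib

open Real MeasureTheory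

/-- The map `v ↦ v^⊥ = (−v₂, v₁, 0)` on `ℝ³`. -/
noncomputable def perp3 (v : Fin 3 → ℝ) : Fin 3 → ℝ := ![-(v 1), v 0, 0]

/-- The Euclidean norm of a vector of `ℝ³`. -/
noncomputable def norm3 (v : Fin 3 → ℝ) : ℝ := Real.sqrt (v 0 ^ 2 + v 1 ^ 2 + v 2 ^ 2)

/-- The Euclidean inner product of `ℝ³`. -/
def dot3 (u v : Fin 3 → ℝ) : ℝ := u 0 * v 0 + u 1 * v 1 + u 2 * v 2

/-- The velocity field `U(x) = (1/(4π)) ∫_D (x−y)^⊥/|x−y|³ dy` generated by the patch `D`. -/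
noncomputable def velU (D : Set (Fin 3 → ℝ)) (x : Fin 3 → ℝ) : Fin 3 → ℝ :=
  (4 * π)⁻¹ • ∫ y in D, (norm3 (x - y) ^ 3)⁻¹ • perp3 (x - y)

/-- Any point on the unit circle is `(cos θ, sin θ)` for some `θ`. -/
lemma exists_cos_sin (u v : ℝ) (h : u ^ 2 + v ^ 2 = 1) :
    ∃ θ : ℝ, Real.cos θ = u ∧ Real.sin θ = v := by
  have habs : ‖(⟨u, v⟩ : ℂ)‖ = 1 := by
    rw [Complex.norm_def, Complex.normSq_mk]
    rw [show u * u + v * v = 1 by nlinarith]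
    exact Real.sqrt_one
  have hz : (⟨u, v⟩ : ℂ) ≠ 0 := by
    intro h0
    rw [h0] at habs
    simp at habs
  refine ⟨Complex.arg ⟨u, v⟩, ?_, ?_⟩
  · rw [Complex.cos_arg hz, habs]; simp
  · rw [Complex.sin_arg, habs]; simp

/-- If `D ⊂ ℝ³` is a bounded measurable set invariant under every rotation about the
`x₃`-axis, then the associated velocity field `U(x) = (1/(4π)) ∫_D (x−y)^⊥/|x−y|³ dy`
satisfies `U(x) · x = 0` for every `x ∈ ℝ³`. -/
theorem stmt6 (D : Set (Fin 3 → ℝ)) (hmeas : MeasurableSet D)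
    (hbdd : Bornology.IsBounded D)
    (hrot : ∀ θ : ℝ, ∀ x : Fin 3 → ℝ,
      (![Real.cos θ * x 0 - Real.sin θ * x 1,
         Real.sin θ * x 0 + Real.cos θ * x 1, x 2] ∈ D) ↔ x ∈ D) :
    ∀ x : Fin 3 → ℝ, dot3 (velU D x) x = 0 := by
  -- rotation invariance for an arbitrary point of the unit circle
  have hR : ∀ u v : ℝ, u ^ 2 + v ^ 2 = 1 → ∀ y : Fin 3 → ℝ,
      (![u * y 0 - v * y 1, v * y 0 + u * y 1, y 2] ∈ D ↔ y ∈ D) := by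
    intro u v huv y
    obtain ⟨θ, hc, hs⟩ := exists_cos_sin u v huv
    rw [← hc, ← hs]
    exact hrot θ y
  -- membership in `D` depends only on the radius and the height
  have hsame : ∀ z y : Fin 3 → ℝ, z 0 ^ 2 + z 1 ^ 2 = y 0 ^ 2 + y 1 ^ 2 → z 2 = y 2 →
      (z ∈ D ↔ y ∈ D) := by
    intro z y hrad h2
    by_cases hρ : y 0 ^ 2 + y 1 ^ 2 = 0
    · have hy0 : y 0 = 0 := by nlinarith [sq_nonneg (y 0), sq_nonneg (y 1)]
      have hy1 : y 1 = 0 := by nlinarith [sq_nonneg (y 0), sq_nonneg (y 1)]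
      have hz0 : z 0 = 0 := by nlinarith [sq_nonneg (z 0), sq_nonneg (z 1)]
      have hz1 : z 1 = 0 := by nlinarith [sq_nonneg (z 0), sq_nonneg (z 1)]
      have hzy : z = y := by
        funext i
        fin_cases i <;> simp [hy0, hy1, hz0, hz1, h2]
      rw [hzy]
    · set ρ : ℝ := y 0 ^ 2 + y 1 ^ 2 with hρdef
      set u : ℝ := (z 0 * y 0 + z 1 * y 1) / ρ with hu
      set v : ℝ := (z 1 * y 0 - z 0 * y 1) / ρ with hv
      have huv : u ^ 2 + v ^ 2 = 1 := by
        rw [hu, hv]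
        field_simp
        linear_combination (y 0 ^ 2 + y 1 ^ 2) * hrad
      have heq : (![u * y 0 - v * y 1, v * y 0 + u * y 1, y 2] : Fin 3 → ℝ) = z := by
        funext i
        fin_cases i
        · show u * y 0 - v * y 1 = z 0
          rw [hu, hv]; field_simp; ring
        · show v * y 0 + u * y 1 = z 1
          rw [hu, hv]; field_simp; ring
        · exact h2.symm
      rw [← heq]
      exact hR u v huv y
  intro x
  set a : ℝ := x 0 with ha
  set b : ℝ := x 1 with hb
  set h : (Fin 3 → ℝ) → ℝ := fun y => (norm3 (x - y) ^ 3)⁻¹ * (a * y 1 - b * y 0) with hh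
  -- Step 1 : the scalar integral vanishes
  have key : ∫ y in D, h y = 0 := by
    by_cases hx : a = 0 ∧ b = 0
    · have : h = fun _ => 0 := by
        funext y; rw [hh]; simp [hx.1, hx.2]
      rw [this]; simp
    · have hr : a ^ 2 + b ^ 2 ≠ 0 := by
        intro h0
        exact hx ⟨by nlinarith [sq_nonneg a, sq_nonneg b], by nlinarith [sq_nonneg a, sq_nonneg b]⟩
      set c : ℝ := (a ^ 2 - b ^ 2) / (a ^ 2 + b ^ 2) with hc
      set s : ℝ := (2 * a * b) / (a ^ 2 + b ^ 2) with hs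
      have hcs : c ^ 2 + s ^ 2 = 1 := by
        rw [hc, hs]; field_simp; ring
      have h1 : c * a + s * b = a := by
        rw [hc, hs]; field_simp; ring
      have h2 : s * a - c * b = b := by
        rw [hc, hs]; field_simp; ring
      set S : (Fin 3 → ℝ) → (Fin 3 → ℝ) :=
        fun y => ![c * y 0 + s * y 1, s * y 0 - c * y 1, y 2] with hS
      have hSS : ∀ y, S (S y) = y := by
        intro y
        funext i
        fin_cases i
        · show c * (c * y 0 + s * y 1) + s * (s * y 0 - c * y 1) = y 0
          linear_combination y 0 * hcs
        · show s * (c * y 0 + s * y 1) - c * (s * y 0 - c * y 1) = y 1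
          linear_combination y 1 * hcs
        · rfl
      set M : Matrix (Fin 3) (Fin 3) ℝ := !![c, s, 0; s, -c, 0; 0, 0, 1] with hM
      have hSlin : S = ⇑(Matrix.toLin' M) := by
        funext y
        funext i
        fin_cases i <;>
          simp [hS, hM, Matrix.toLin'_apply, Matrix.mulVec, dotProduct,
            Fin.sum_univ_three] <;> ring
      have hdet : LinearMap.det (Matrix.toLin' M) = -1 := by
        rw [LinearMap.det_toLin', hM, Matrix.det_fin_three]
        simp
        linear_combination -hcs
      have hSmeas : Measurable S := by
        rw [hSlin]
        exact (Matrix.toLin' M).continuous_of_finiteDimensional.measurable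
      have hmp : MeasurePreserving S (volume : Measure (Fin 3 → ℝ)) volume := by
        refine ⟨hSmeas, ?_⟩
        rw [hSlin, Real.map_linearMap_volume_pi_eq_smul_volume_pi (by rw [hdet]; norm_num),
          hdet]
        norm_num
      set E : (Fin 3 → ℝ) ≃ᵐ (Fin 3 → ℝ) :=
        { toFun := S
          invFun := S
          left_inv := hSS
          right_inv := hSS
          measurable_toFun := hSmeas
          measurable_invFun := hSmeas } with hE
      have hemb : MeasurableEmbedding S := E.measurableEmbedding
      have hpre : S ⁻¹' D = D := by
        ext y
        simp only [Set.mem_preimage]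
        refine hsame (S y) y ?_ ?_
        · show (c * y 0 + s * y 1) ^ 2 + (s * y 0 - c * y 1) ^ 2 = y 0 ^ 2 + y 1 ^ 2
          linear_combination (y 0 ^ 2 + y 1 ^ 2) * hcs
        · rfl
      have hhS : ∀ y, h (S y) = - h y := by
        intro y
        have hnorm : norm3 (x - S y) = norm3 (x - y) := by
          unfold norm3
          congr 1
          show (x 0 - (c * y 0 + s * y 1)) ^ 2 + (x 1 - (s * y 0 - c * y 1)) ^ 2
              + (x 2 - y 2) ^ 2
            = (x 0 - y 0) ^ 2 + (x 1 - y 1) ^ 2 + (x 2 - y 2) ^ 2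
          linear_combination (y 0 ^ 2 + y 1 ^ 2) * hcs - 2 * y 0 * h1 - 2 * y 1 * h2
        have hcross : a * (S y) 1 - b * (S y) 0 = -(a * y 1 - b * y 0) := by
          show a * (s * y 0 - c * y 1) - b * (c * y 0 + s * y 1) = -(a * y 1 - b * y 0)
          linear_combination y 0 * h2 - y 1 * h1
        rw [hh]
        simp only
        rw [hnorm, hcross]
        ring
      have e1 : ∫ y in S ⁻¹' D, h (S y) = ∫ y in D, h y :=
        hmp.setIntegral_preimage_emb hemb h D
      rw [hpre] at e1
      simp only [hhS] at e1
      rw [integral_neg] at e1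
      linarith
  -- Step 2 : reduce the statement to the scalar integral
  have hdotsmul : ∀ (t : ℝ) (v : Fin 3 → ℝ), dot3 (t • v) x = t * dot3 v x := by
    intro t v
    simp [dot3, Pi.smul_apply, smul_eq_mul]
    ring
  rw [velU, hdotsmul]
  by_cases hint : Integrable (fun y => (norm3 (x - y) ^ 3)⁻¹ • perp3 (x - y))
      (volume.restrict D)
  · set L : (Fin 3 → ℝ) →L[ℝ] ℝ :=
      a • (ContinuousLinearMap.proj 0 : (Fin 3 → ℝ) →L[ℝ] ℝ)
        + b • (ContinuousLinearMap.proj 1 : (Fin 3 → ℝ) →L[ℝ] ℝ)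
        + x 2 • (ContinuousLinearMap.proj 2 : (Fin 3 → ℝ) →L[ℝ] ℝ) with hL
    have hLv : ∀ v : Fin 3 → ℝ, L v = dot3 v x := by
      intro v
      rw [hL]
      simp [dot3, ContinuousLinearMap.proj_apply]
      ring
    have hLh : ∀ y : Fin 3 → ℝ, L ((norm3 (x - y) ^ 3)⁻¹ • perp3 (x - y)) = h y := by
      intro y
      rw [hLv, hh]
      simp [dot3, perp3, Pi.smul_apply, smul_eq_mul, Pi.sub_apply]
      ring
    rw [← hLv, ← L.integral_comp_comm hint]
    simp only [hLh]
    rw [key, mul_zero]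
  · rw [integral_undef hint]
    simp [dot3]
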